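/- The tag-options lattice infimum is a greatest lower bound: for any subset Λ of the tag-options lattice over tags T and options O, with V := {A | (A, f) ∈ Λ}, the element (⋃ V, ⨅ {φ_{A, ⋃V}(f) | (A, f) ∈ Λ}) is a lower bound of Λ, and any (T', f') that is below every element of Λ satisfies (T', f') ⊑ (⋃ V, ⨅ {φ_{A, ⋃V}(f) | (A, f) ∈ Λ}). -/
import Mathlib


open Classical in
noncomputable def phi {T O : Type*} (A : Set T) (f : T → Set O) : T → Set O :=
  fun t => if t ∈ A then f t else Set.univ

def tole {T O : Type*} (x y : Set T × (T → Set O)) : Prop :=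
  y.1 ⊆ x.1 ∧ ∀ t ∈ y.1, phi x.1 x.2 t ⊆ y.2 t

theorem tagOptions_inf_is_glb
    {T O : Type*} (Λ : Set (Set T × (T → Set O))) :
    (∀ x ∈ Λ,
      tole (⋃ x ∈ Λ, x.1, fun t => ⋂ x ∈ Λ, phi x.1 x.2 t) x) ∧
    (∀ y : Set T × (T → Set O), (∀ x ∈ Λ, tole y x) →
      tole y (⋃ x ∈ Λ, x.1, fun t => ⋂ x ∈ Λ, phi x.1 x.2 t)) := by
  constructor
  · intro x hx
    refine ⟨fun t ht => Set.mem_biUnion hx ht, fun t ht o ho => ?_⟩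
    simp only [phi, Set.mem_biUnion hx ht, if_pos, Set.mem_iInter] at ho
    simpa [phi, ht] using ho x hx
  · intro y hy
    constructor
    · intro t ht
      rcases Set.mem_iUnion₂.mp ht with ⟨x, hx, hxt⟩
      exact (hy x hx).1 hxt
    · intro t ht o ho
      refine Set.mem_iInter₂.mpr fun x hx => ?_
      by_cases hxt : t ∈ x.1
      · have h2 := (hy x hx).2 t hxt ho
        simpa [phi, hxt] using h2
      · simp [phi, hxt]
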